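/- Let μ : ℝ → ℝ be three times differentiable and satisfy the thirty-fourth Painlevé equation μ'''(x) = −6μ(x)μ'(x) + 2xμ'(x) + 4μ(x) for all x ∈ ℝ. Set μ̃(x) = μ(x) − x. Then the function x ↦ μ̃(x)μ̃''(x) − (1/2)μ̃'(x)² + 2μ̃(x)³ + 2x·μ̃(x)² is constant on ℝ. In particular, if in addition μ(x) ≠ x for all x ∈ ℝ, then there is a constant c ∈ ℝ such that μ̃''(x) = μ̃'(x)²/(2μ̃(x)) − 2μ̃(x)² − 2x·μ̃(x) + c/μ̃(x) for all x ∈ ℝ (the Painlevé-type equation P4′). -/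

import Mathlib

/-- if `μ` solves P34, `μ''' = −6μμ' + 2xμ' + 4μ`, and `μ̃ = μ − x`, then
`μ̃μ̃'' − (1/2)(μ̃')² + 2μ̃³ + 2xμ̃²` is constant; in particular if `μ(x) ≠ x` everywhere
then `μ̃` solves the Painlevé-type equation P4′:
`μ̃'' = (μ̃')²/(2μ̃) − 2μ̃² − 2xμ̃ + c/μ̃`. -/
theorem stmt_7 (m : ℝ → ℝ) (hm : ContDiff ℝ 3 m)
    (hP34 : ∀ x : ℝ, deriv (deriv (deriv m)) x
      = -6 * m x * deriv m x + 2 * x * deriv m x + 4 * m x)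
    (mt : ℝ → ℝ) (hmt : ∀ x : ℝ, mt x = m x - x) :
    (∃ C : ℝ, ∀ x : ℝ,
      mt x * deriv (deriv mt) x - (1 / 2) * (deriv mt x) ^ 2 + 2 * mt x ^ 3
        + 2 * x * mt x ^ 2 = C)
    ∧ ((∀ x : ℝ, m x ≠ x) →
      ∃ c : ℝ, ∀ x : ℝ, deriv (deriv mt) x
        = (deriv mt x) ^ 2 / (2 * mt x) - 2 * mt x ^ 2 - 2 * x * mt x + c / mt x) := by
  have hmt' : mt = fun x => m x - x := funext hmt
  subst hmt'
  have hm3 : ContDiff ℝ ((2 : ℕ) + 1) m := by exact_mod_cast hm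
  have hdm : Differentiable ℝ m := hm.differentiable (by norm_num)
  have h2 : ContDiff ℝ 2 (deriv m) := (contDiff_succ_iff_deriv.mp hm3).2.2
  have hm2 : ContDiff ℝ ((1 : ℕ) + 1) (deriv m) := by exact_mod_cast h2
  have hdm' : Differentiable ℝ (deriv m) := h2.differentiable (by norm_num)
  have h1 : ContDiff ℝ 1 (deriv (deriv m)) := (contDiff_succ_iff_deriv.mp hm2).2.2
  have hdm'' : Differentiable ℝ (deriv (deriv m)) := h1.differentiable (by norm_num)
  have hd1 : deriv (fun x => m x - x) = fun x => deriv m x - 1 := by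
    funext x
    rw [deriv_fun_sub (hdm x) differentiableAt_fun_id, deriv_id'']
  have hd2 : deriv (deriv (fun x => m x - x)) = deriv (deriv m) := by
    rw [hd1]
    funext x
    rw [deriv_fun_sub (hdm' x) (differentiableAt_const 1), deriv_const]
    ring
  -- The conserved quantity
  set F : ℝ → ℝ := fun x => (m x - x) * deriv (deriv (fun y => m y - y)) x
      - (1 / 2) * (deriv (fun y => m y - y) x) ^ 2 + 2 * (m x - x) ^ 3
      + 2 * x * (m x - x) ^ 2 with hF
  have hFder : ∀ x : ℝ, HasDerivAt F 0 x := by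
    intro x
    have ha : HasDerivAt (fun y => m y - y) (deriv m x - 1) x :=
      (hdm x).hasDerivAt.sub (hasDerivAt_id x)
    have hb : HasDerivAt (fun y => deriv (fun z => m z - z) y)
        (deriv (deriv m) x) x := by
      simp only [hd1]
      exact (hdm' x).hasDerivAt.sub_const 1
    have hc : HasDerivAt (fun y => deriv (deriv (fun z => m z - z)) y)
        (deriv (deriv (deriv m)) x) x := by
      simp only [hd2]
      exact (hdm'' x).hasDerivAt
    have hDval : deriv (deriv (fun z => m z - z)) x = deriv (deriv m) x := by
      rw [hd2]
    have hdval : deriv (fun z => m z - z) x = deriv m x - 1 := by rw [hd1]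
    have hid : HasDerivAt (fun y : ℝ => 2 * y) 2 x := by
      simpa using (hasDerivAt_id x).const_mul 2
    have hmain := (((ha.mul hc).sub ((hb.pow 2).const_mul (1 / 2))).add
      ((ha.pow 3).const_mul 2)).add (hid.mul (ha.pow 2))
    refine hmain.congr_deriv ?_
    rw [hDval, hdval, hP34 x, Pi.pow_apply]
    push_cast
    ring
  have hconst : ∀ x : ℝ, F x = F 0 := by
    intro x
    exact is_const_of_deriv_eq_zero (fun y => (hFder y).differentiableAt)
      (fun y => (hFder y).deriv) x 0
  refine ⟨⟨F 0, fun x => hconst x⟩, fun hne => ⟨F 0, fun x => ?_⟩⟩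
  have h : (m x - x) * deriv (deriv fun y => m y - y) x
      - (1 / 2) * (deriv (fun y => m y - y) x) ^ 2 + 2 * (m x - x) ^ 3
      + 2 * x * (m x - x) ^ 2 = F 0 := hconst x
  have hx : m x - x ≠ 0 := sub_ne_zero.mpr (hne x)
  rw [← h]
  field_simp
  ring
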